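/- Let (P, ≼, ∧, ∨) be a locally finite lattice with least element 0̂, let f be a semimultiplicative complex-valued function on P with f(x) ≠ 0 for all x ∈ P, set g(x) = 1/f(x), and let S = {x_1, …, x_n} be a finite meet closed subset of P with distinct elements, indexed so that x_i ≼ x_j only if i ≤ j. Assume d_i = ∑_{z ≼ x_i, z ⋠ x_j for all j < i} (f_d * μ)(0̂, z) ≠ 0 and l_i = ∑_{z ≼ x_i, z ⋠ x_j for all j < i} (g_d * μ)(0̂, z) ≠ 0 for all i. Then every nonzero (S)_f-eigenvalue λ ∈ ℂ of [S]_f satisfies |λ| ≥ (min_{1≤i≤n} |f(x_i)|²) · m_g · M_f⁻¹ · C_n⁻¹ · c_n, where m_g = min_{1≤i≤n} |l_i| and M_f = max_{1≤i≤n} |d_i|. -/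

import Mathlib

open Matrix Finset

/-- `K n` : the set of `n × n` real lower triangular `0,1`-matrices with unit diagonal. -/
def MemKn {n : ℕ} (X : Matrix (Fin n) (Fin n) ℝ) : Prop :=
  (∀ i j, i < j → X i j = 0) ∧ (∀ i j, X i j = 0 ∨ X i j = 1) ∧ (∀ i, X i i = 1)

/-- The smallest eigenvalue of the (Hermitian) matrix `X * Xᴴ`. -/
noncomputable def gramMinEig {n : ℕ} (X : Matrix (Fin n) (Fin n) ℝ) : ℝ :=
  ⨅ i, (Matrix.isHermitian_mul_conjTranspose_self X).eigenvalues i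

/-- The largest eigenvalue of the (Hermitian) matrix `X * Xᴴ`. -/
noncomputable def gramMaxEig {n : ℕ} (X : Matrix (Fin n) (Fin n) ℝ) : ℝ :=
  ⨆ i, (Matrix.isHermitian_mul_conjTranspose_self X).eigenvalues i

/-- `c n` : the minimum over `X ∈ K n` of the smallest eigenvalue of `X Xᵀ`. -/
noncomputable def cKn (n : ℕ) : ℝ :=
  ⨅ X : {X : Matrix (Fin n) (Fin n) ℝ // MemKn X}, gramMinEig X.1

/-- `C n` : the maximum over `X ∈ K n` of the largest eigenvalue of `X Xᵀ`. -/
noncomputable def CKn (n : ℕ) : ℝ :=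
  ⨆ X : {X : Matrix (Fin n) (Fin n) ℝ // MemKn X}, gramMaxEig X.1

section Aux

variable {n : ℕ}

noncomputable def qsc (w : Fin n → ℂ) : ℝ := ∑ i, Complex.normSq (w i)

lemma qsc_nonneg (w : Fin n → ℂ) : 0 ≤ qsc w :=
  Finset.sum_nonneg fun _ _ => Complex.normSq_nonneg _

lemma qsc_pos {w : Fin n → ℂ} (hw : w ≠ 0) : 0 < qsc w := by
  rcases (qsc_nonneg w).lt_or_eq with h | h
  · exact h
  · exfalso
    apply hw
    funext i
    have := (Finset.sum_eq_zero_iff_of_nonneg (fun i _ => Complex.normSq_nonneg (w i))).1 h.symm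
    have := this i (Finset.mem_univ i)
    simpa using Complex.normSq_eq_zero.1 this

lemma qsc_smul (c : ℂ) (w : Fin n → ℂ) :
    qsc (c • w) = Complex.normSq c * qsc w := by
  simp [qsc, Complex.normSq_mul, Finset.mul_sum]

/-- sum of eigenvalues is the trace, real symmetric case -/
lemma sum_eig_trace {M : Matrix (Fin n) (Fin n) ℝ} (hM : M.IsHermitian) :
    ∑ i, hM.eigenvalues i = M.trace := by
  conv_rhs => rw [hM.spectral_theorem, Unitary.conjStarAlgAut_apply]
  rw [Matrix.trace_mul_cycle]
  have h1 : (star (hM.eigenvectorUnitary : Matrix (Fin n) (Fin n) ℝ)) *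
      (hM.eigenvectorUnitary : Matrix (Fin n) (Fin n) ℝ) = 1 :=
    Matrix.mem_unitaryGroup_iff'.1 hM.eigenvectorUnitary.2
  rw [h1, one_mul, Matrix.trace_diagonal]
  simp

/-- Rayleigh bounds for a real symmetric matrix. -/
lemma rayleigh_low {M : Matrix (Fin n) (Fin n) ℝ} (hM : M.IsHermitian)
    (y : Fin n → ℝ) :
    (⨅ i, hM.eigenvalues i) * (y ⬝ᵥ y) ≤ y ⬝ᵥ (M *ᵥ y) ∧
      y ⬝ᵥ (M *ᵥ y) ≤ (⨆ i, hM.eigenvalues i) * (y ⬝ᵥ y) := by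
  rcases Nat.eq_zero_or_pos n with hn | hn
  · subst hn
    simp [dotProduct, mulVec, Finset.sum_eq_zero]
  have : Nonempty (Fin n) := ⟨⟨0, hn⟩⟩
  set U : Matrix (Fin n) (Fin n) ℝ := (hM.eigenvectorUnitary : Matrix (Fin n) (Fin n) ℝ) with hU
  set z : Fin n → ℝ := star U *ᵥ y with hz
  have hsU : star U = Uᵀ := by
    ext i j
    simp [Matrix.star_apply]
  have hUz : U *ᵥ z = y := by
    rw [hz, Matrix.mulVec_mulVec, Matrix.mem_unitaryGroup_iff.1 hM.eigenvectorUnitary.2,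
      Matrix.one_mulVec]
  have hdot : ∀ w : Fin n → ℝ, y ⬝ᵥ (U *ᵥ w) = z ⬝ᵥ w := by
    intro w
    rw [Matrix.dotProduct_mulVec, hz, hsU, Matrix.mulVec_transpose]
  have hzz : z ⬝ᵥ z = y ⬝ᵥ y := by
    rw [← hdot z, hUz]
  have key : y ⬝ᵥ (M *ᵥ y) = ∑ i, hM.eigenvalues i * (z i * z i) := by
    conv_lhs => rw [hM.spectral_theorem, Unitary.conjStarAlgAut_apply]
    rw [← Matrix.mulVec_mulVec, ← Matrix.mulVec_mulVec, hdot, ← hz]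
    simp [dotProduct, Matrix.mulVec_diagonal]
    exact Finset.sum_congr rfl fun i _ => by ring
  have hblow : BddBelow (Set.range hM.eigenvalues) := (Set.finite_range _).bddBelow
  have hbup : BddAbove (Set.range hM.eigenvalues) := (Set.finite_range _).bddAbove
  constructor
  · rw [key, ← hzz]
    have : (⨅ i, hM.eigenvalues i) * (z ⬝ᵥ z) = ∑ i, (⨅ i, hM.eigenvalues i) * (z i * z i) := by
      rw [← Finset.mul_sum]; rfl
    rw [this]
    refine Finset.sum_le_sum fun i _ => ?_
    exact mul_le_mul_of_nonneg_right (ciInf_le hblow i) (mul_self_nonneg _)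
  · rw [key, ← hzz]
    have : (⨆ i, hM.eigenvalues i) * (z ⬝ᵥ z) = ∑ i, (⨆ i, hM.eigenvalues i) * (z i * z i) := by
      rw [← Finset.mul_sum]; rfl
    rw [this]
    refine Finset.sum_le_sum fun i _ => ?_
    exact mul_le_mul_of_nonneg_right (le_ciSup hbup i) (mul_self_nonneg _)

lemma memKn_one : MemKn (1 : Matrix (Fin n) (Fin n) ℝ) := by
  refine ⟨fun i j hij => ?_, fun i j => ?_, fun i => ?_⟩
  · rw [Matrix.one_apply_ne hij.ne]
  · by_cases h : i = j
    · right; rw [h, Matrix.one_apply_eq]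
    · left; rw [Matrix.one_apply_ne h]
  · rw [Matrix.one_apply_eq]

lemma gramMinEig_nonneg (X : Matrix (Fin n) (Fin n) ℝ) : 0 ≤ gramMinEig X := by
  rcases Nat.eq_zero_or_pos n with hn | hn
  · subst hn
    rw [gramMinEig, Real.iInf_of_isEmpty]
  have : Nonempty (Fin n) := ⟨⟨0, hn⟩⟩
  exact le_ciInf fun i => Matrix.eigenvalues_self_mul_conjTranspose_nonneg X i

lemma gram_trace_le {X : Matrix (Fin n) (Fin n) ℝ} (hX : MemKn X) :
    (X * Xᴴ).trace ≤ (n : ℝ) ^ 2 := by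
  have h : (X * Xᴴ).trace = ∑ i, ∑ j, X i j * X i j := by
    simp [Matrix.trace, Matrix.diag, Matrix.mul_apply, Matrix.conjTranspose_apply]
  rw [h]
  calc ∑ i, ∑ j, X i j * X i j ≤ ∑ _i : Fin n, ∑ _j : Fin n, (1 : ℝ) := by
        refine Finset.sum_le_sum fun i _ => Finset.sum_le_sum fun j _ => ?_
        rcases hX.2.1 i j with h0 | h1
        · rw [h0]; norm_num
        · rw [h1]; norm_num
    _ = (n : ℝ) ^ 2 := by simp [sq]

lemma gram_trace_ge {X : Matrix (Fin n) (Fin n) ℝ} (hX : MemKn X) :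
    (n : ℝ) ≤ (X * Xᴴ).trace := by
  have h : (X * Xᴴ).trace = ∑ i, ∑ j, X i j * X i j := by
    simp [Matrix.trace, Matrix.diag, Matrix.mul_apply, Matrix.conjTranspose_apply]
  rw [h]
  calc (n : ℝ) = ∑ _i : Fin n, (1 : ℝ) := by simp
    _ ≤ ∑ i, ∑ j, X i j * X i j := by
        refine Finset.sum_le_sum fun i _ => ?_
        have := Finset.single_le_sum (f := fun j => X i j * X i j)
          (fun j _ => mul_self_nonneg _) (Finset.mem_univ i)
        simp only [hX.2.2 i, one_mul] at this
        simpa using this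

lemma gramMaxEig_le {X : Matrix (Fin n) (Fin n) ℝ} (hX : MemKn X) :
    gramMaxEig X ≤ (n : ℝ) ^ 2 := by
  rcases Nat.eq_zero_or_pos n with hn | hn
  · subst hn
    rw [gramMaxEig, Real.iSup_of_isEmpty]
    positivity
  have : Nonempty (Fin n) := ⟨⟨0, hn⟩⟩
  refine ciSup_le fun i => ?_
  calc (Matrix.isHermitian_mul_conjTranspose_self X).eigenvalues i
      ≤ ∑ j, (Matrix.isHermitian_mul_conjTranspose_self X).eigenvalues j :=
        Finset.single_le_sum
          (fun j _ => Matrix.eigenvalues_self_mul_conjTranspose_nonneg X j) (Finset.mem_univ i)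
    _ = (X * Xᴴ).trace := sum_eig_trace _
    _ ≤ (n : ℝ) ^ 2 := gram_trace_le hX

lemma gramMaxEig_ge_one (hn : 0 < n) {X : Matrix (Fin n) (Fin n) ℝ}
    (hX : MemKn X) : 1 ≤ gramMaxEig X := by
  have : Nonempty (Fin n) := ⟨⟨0, hn⟩⟩
  have hbdd : BddAbove (Set.range (Matrix.isHermitian_mul_conjTranspose_self X).eigenvalues) :=
    (Set.finite_range _).bddAbove
  have h1 : (n : ℝ) ≤ ∑ _j : Fin n, gramMaxEig X := by
    calc (n : ℝ) ≤ (X * Xᴴ).trace := gram_trace_ge hX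
      _ = ∑ j, (Matrix.isHermitian_mul_conjTranspose_self X).eigenvalues j :=
          (sum_eig_trace _).symm
      _ ≤ ∑ _j : Fin n, gramMaxEig X :=
          Finset.sum_le_sum fun j _ => le_ciSup hbdd j
  rw [Finset.sum_const, Finset.card_univ, Fintype.card_fin, nsmul_eq_mul] at h1
  have hn' : (0 : ℝ) < n := by exact_mod_cast hn
  nlinarith [h1]

lemma cKn_le_gramMin {X : Matrix (Fin n) (Fin n) ℝ} (hX : MemKn X) :
    cKn n ≤ gramMinEig X :=
  ciInf_le ⟨0, by rintro _ ⟨Y, rfl⟩; exact gramMinEig_nonneg Y.1⟩ (⟨X, hX⟩ : {X // MemKn X})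

lemma gramMax_le_CKn {X : Matrix (Fin n) (Fin n) ℝ} (hX : MemKn X) :
    gramMaxEig X ≤ CKn n :=
  le_ciSup (f := fun Y : {X : Matrix (Fin n) (Fin n) ℝ // MemKn X} => gramMaxEig Y.1)
    ⟨(n : ℝ) ^ 2, by rintro _ ⟨Y, rfl⟩; exact gramMaxEig_le Y.2⟩ ⟨X, hX⟩

lemma cKn_nonneg : 0 ≤ cKn n := by
  have : Nonempty {X : Matrix (Fin n) (Fin n) ℝ // MemKn X} := ⟨⟨1, memKn_one⟩⟩
  exact le_ciInf fun Y => gramMinEig_nonneg Y.1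

lemma one_le_CKn (hn : 0 < n) : 1 ≤ CKn n :=
  le_trans (gramMaxEig_ge_one hn memKn_one) (gramMax_le_CKn memKn_one)

lemma qsc_real_mulVec (A : Matrix (Fin n) (Fin n) ℝ) (w : Fin n → ℂ) :
    qsc ((A.map (Complex.ofReal)) *ᵥ w) =
      (A *ᵥ fun i => (w i).re) ⬝ᵥ (A *ᵥ fun i => (w i).re) +
      (A *ᵥ fun i => (w i).im) ⬝ᵥ (A *ᵥ fun i => (w i).im) := by
  rw [qsc, dotProduct, dotProduct, ← Finset.sum_add_distrib]
  refine Finset.sum_congr rfl fun i _ => ?_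
  rw [Complex.normSq_apply]
  have hre : ((A.map Complex.ofReal *ᵥ w) i).re = (A *ᵥ fun k => (w k).re) i := by
    simp [Matrix.mulVec, dotProduct, Matrix.map_apply, Complex.re_sum,
      Complex.re_ofReal_mul]
  have him : ((A.map Complex.ofReal *ᵥ w) i).im = (A *ᵥ fun k => (w k).im) i := by
    simp [Matrix.mulVec, dotProduct, Matrix.map_apply, Complex.im_sum,
      Complex.im_ofReal_mul]
  rw [hre, him]

lemma qsc_decomp (w : Fin n → ℂ) :
    qsc w = (fun i => (w i).re) ⬝ᵥ (fun i => (w i).re) +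
      (fun i => (w i).im) ⬝ᵥ (fun i => (w i).im) := by
  rw [qsc, dotProduct, dotProduct, ← Finset.sum_add_distrib]
  exact Finset.sum_congr rfl fun i _ => Complex.normSq_apply _

lemma quadform_transpose (X : Matrix (Fin n) (Fin n) ℝ) (a : Fin n → ℝ) :
    (Xᵀ *ᵥ a) ⬝ᵥ (Xᵀ *ᵥ a) = a ⬝ᵥ ((X * Xᴴ) *ᵥ a) := by
  have hC : Xᴴ = Xᵀ := by
    ext i j; simp [Matrix.conjTranspose_apply]
  rw [hC, ← Matrix.mulVec_mulVec, Matrix.dotProduct_mulVec a X, ← Matrix.mulVec_transpose]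

lemma dp_self_nonneg (a : Fin n → ℝ) : 0 ≤ a ⬝ᵥ a :=
  Finset.sum_nonneg fun i _ => mul_self_nonneg _

lemma kn_bound_low {X : Matrix (Fin n) (Fin n) ℝ} (hX : MemKn X) (w : Fin n → ℂ) :
    cKn n * qsc w ≤ qsc ((Xᵀ.map Complex.ofReal) *ᵥ w) := by
  rw [qsc_real_mulVec, quadform_transpose, quadform_transpose]
  have hM := Matrix.isHermitian_mul_conjTranspose_self X
  have h1 := (rayleigh_low hM (fun i => (w i).re)).1
  have h2 := (rayleigh_low hM (fun i => (w i).im)).1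
  have hgm : gramMinEig X = ⨅ i, hM.eigenvalues i := rfl
  rw [← hgm] at h1 h2
  have hc := cKn_le_gramMin hX
  have ha := dp_self_nonneg (fun i => (w i).re)
  have hb := dp_self_nonneg (fun i => (w i).im)
  rw [qsc_decomp w]
  nlinarith [h1, h2, hc, ha, hb]

lemma kn_bound_up {X : Matrix (Fin n) (Fin n) ℝ} (hX : MemKn X) (w : Fin n → ℂ) :
    qsc ((Xᵀ.map Complex.ofReal) *ᵥ w) ≤ CKn n * qsc w := by
  rw [qsc_real_mulVec, quadform_transpose, quadform_transpose]
  have hM := Matrix.isHermitian_mul_conjTranspose_self X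
  have h1 := (rayleigh_low hM (fun i => (w i).re)).2
  have h2 := (rayleigh_low hM (fun i => (w i).im)).2
  have hgm : gramMaxEig X = ⨆ i, hM.eigenvalues i := rfl
  rw [← hgm] at h1 h2
  have hc := gramMax_le_CKn hX
  have ha := dp_self_nonneg (fun i => (w i).re)
  have hb := dp_self_nonneg (fun i => (w i).im)
  rw [qsc_decomp w]
  nlinarith [h1, h2, hc, ha, hb]

end Aux
section Rev

variable {n : ℕ}

lemma qsc_comp_rev (w : Fin n → ℂ) : qsc (w ∘ Fin.rev) = qsc w := by
  rw [qsc, qsc]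
  exact Fintype.sum_equiv Fin.revPerm _ _ (fun i => by simp)

lemma memKn_rev {X : Matrix (Fin n) (Fin n) ℝ} (hX : MemKn X) :
    MemKn (Matrix.of fun i j => X (Fin.rev j) (Fin.rev i)) := by
  refine ⟨fun i j hij => ?_, fun i j => hX.2.1 _ _, fun i => hX.2.2 _⟩
  exact hX.1 _ _ (by simpa using hij)

lemma qsc_rev_mulVec (X : Matrix (Fin n) (Fin n) ℝ) (w : Fin n → ℂ) :
    qsc (((Matrix.of fun i j => X (Fin.rev j) (Fin.rev i))ᵀ.map Complex.ofReal) *ᵥ (w ∘ Fin.rev))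
      = qsc ((X.map Complex.ofReal) *ᵥ w) := by
  have hpt : ∀ i, (((Matrix.of fun i j => X (Fin.rev j) (Fin.rev i))ᵀ.map Complex.ofReal) *ᵥ
      (w ∘ Fin.rev)) i = ((X.map Complex.ofReal) *ᵥ w) (Fin.rev i) := by
    intro i
    simp only [Matrix.mulVec, dotProduct, Matrix.map_apply, Matrix.transpose_apply,
      Matrix.of_apply, Function.comp]
    exact Fintype.sum_equiv (Fin.revPerm) _ _ (by intro j; simp)
  rw [qsc, qsc]
  calc ∑ i, Complex.normSq ((((Matrix.of fun i j => X (Fin.rev j) (Fin.rev i))ᵀ.map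
        Complex.ofReal) *ᵥ (w ∘ Fin.rev)) i)
      = ∑ i, Complex.normSq (((X.map Complex.ofReal) *ᵥ w) (Fin.rev i)) := by
        exact Finset.sum_congr rfl fun i _ => by rw [hpt]
    _ = ∑ i, Complex.normSq (((X.map Complex.ofReal) *ᵥ w) i) :=
        Fintype.sum_equiv Fin.revPerm _ _ (fun i => rfl)

lemma kn_bound_low' {X : Matrix (Fin n) (Fin n) ℝ} (hX : MemKn X) (w : Fin n → ℂ) :
    cKn n * qsc w ≤ qsc ((X.map Complex.ofReal) *ᵥ w) := by
  have h := kn_bound_low (memKn_rev hX) (w ∘ Fin.rev)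
  rwa [qsc_rev_mulVec, qsc_comp_rev] at h

lemma kn_bound_up' {X : Matrix (Fin n) (Fin n) ℝ} (hX : MemKn X) (w : Fin n → ℂ) :
    qsc ((X.map Complex.ofReal) *ᵥ w) ≤ CKn n * qsc w := by
  have h := kn_bound_up (memKn_rev hX) (w ∘ Fin.rev)
  rwa [qsc_rev_mulVec, qsc_comp_rev] at h

lemma qsc_diag_low (c : Fin n → ℂ) (m : ℝ) (hm : 0 ≤ m)
    (h : ∀ i, m ≤ ‖c i‖) (w : Fin n → ℂ) :
    m ^ 2 * qsc w ≤ qsc ((Matrix.diagonal c) *ᵥ w) := by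
  rw [qsc, qsc, Finset.mul_sum]
  refine Finset.sum_le_sum fun i _ => ?_
  rw [Matrix.mulVec_diagonal, Complex.normSq_mul]
  have h1 : m ^ 2 ≤ Complex.normSq (c i) := by
    rw [← Complex.sq_norm]
    exact pow_le_pow_left₀ hm (h i) 2
  exact mul_le_mul_of_nonneg_right h1 (Complex.normSq_nonneg _)

lemma qsc_diag_up (c : Fin n → ℂ) (m : ℝ)
    (h : ∀ i, ‖c i‖ ≤ m) (w : Fin n → ℂ) :
    qsc ((Matrix.diagonal c) *ᵥ w) ≤ m ^ 2 * qsc w := by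
  rw [qsc, qsc, Finset.mul_sum]
  refine Finset.sum_le_sum fun i _ => ?_
  rw [Matrix.mulVec_diagonal, Complex.normSq_mul]
  have h1 : Complex.normSq (c i) ≤ m ^ 2 := by
    rw [← Complex.sq_norm]
    exact pow_le_pow_left₀ (norm_nonneg _) (h i) 2
  exact mul_le_mul_of_nonneg_right h1 (Complex.normSq_nonneg _)

end Rev
section Lattice

variable {P : Type*} [Lattice P] [OrderBot P] [LocallyFiniteOrder P]
  [DecidableRel ((· ≤ ·) : P → P → Prop)]

open scoped Classical in
lemma moebius_sum (mu : P → P → ℂ) (hmu_self : ∀ p, mu p p = 1)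
    (hmu_lt : ∀ p q : P, p < q → mu p q = -∑ r ∈ Finset.Ico p q, mu p r)
    {w y : P} (h : w ≤ y) :
    ∑ z ∈ Finset.Icc w y, mu w z = if w = y then 1 else 0 := by
  rcases h.lt_or_eq with hlt | rfl
  · rw [if_neg hlt.ne, ← Finset.Ico_insert_right h, Finset.sum_insert (by simp),
      hmu_lt _ _ hlt]
    ring
  · rw [if_pos rfl, Finset.Icc_self, Finset.sum_singleton, hmu_self]

lemma moebius_inversion (mu : P → P → ℂ) (hmu_self : ∀ p, mu p p = 1)
    (hmu_lt : ∀ p q : P, p < q → mu p q = -∑ r ∈ Finset.Ico p q, mu p r)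
    (h : P → ℂ) (y : P) :
    ∑ z ∈ Finset.Icc ⊥ y, ∑ w ∈ Finset.Icc ⊥ z, h w * mu w z = h y := by
  classical
  rw [Finset.sum_comm' (t' := Finset.Icc ⊥ y) (s' := fun w => Finset.Icc w y)
    (by
      intro z w
      simp only [Finset.mem_Icc, bot_le, true_and]
      constructor
      · rintro ⟨h1, h2⟩; exact ⟨⟨h2, h1⟩, h2.trans h1⟩
      · rintro ⟨⟨h1, h2⟩, _⟩; exact ⟨h2, h1⟩)]
  have hcong : ∀ w ∈ Finset.Icc (⊥ : P) y,
      ∑ z ∈ Finset.Icc w y, h w * mu w z = if w = y then h y else 0 := by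
    intro w hw
    rw [← Finset.mul_sum, moebius_sum mu hmu_self hmu_lt (Finset.mem_Icc.1 hw).2]
    split_ifs with hwy
    · rw [hwy]; ring
    · ring
  rw [Finset.sum_congr rfl hcong, Finset.sum_ite_eq' (Finset.Icc ⊥ y) y (fun _ => h y),
    if_pos (Finset.mem_Icc.2 ⟨bot_le, le_refl y⟩)]

variable {n : ℕ} (x : Fin n → P)

lemma partition_sum (hord : ∀ i j, x i ≤ x j → i ≤ j)
    (hmeet : ∀ i j, ∃ k, x k = x i ⊓ x j) (F : P → ℂ) (m : Fin n) :
    ∑ k ∈ Finset.univ.filter (fun k => x k ≤ x m),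
        ∑ z ∈ (Finset.Icc ⊥ (x k)).filter (fun z => ∀ j, j < k → ¬ z ≤ x j), F z
      = ∑ z ∈ Finset.Icc ⊥ (x m), F z := by
  classical
  set t : Fin n → Finset P :=
    fun k => (Finset.Icc ⊥ (x k)).filter (fun z => ∀ j, j < k → ¬ z ≤ x j) with ht
  have hdisj : (↑(Finset.univ.filter (fun k => x k ≤ x m)) : Set (Fin n)).PairwiseDisjoint t := by
    have key : ∀ a b : Fin n, a < b → Disjoint (t a) (t b) := by
      intro a b hlt
      rw [Finset.disjoint_left]
      intro z hza hzb
      have h1 : z ≤ x a := (Finset.mem_Icc.1 (Finset.mem_filter.1 hza).1).2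
      have h2 : ¬ z ≤ x a := (Finset.mem_filter.1 hzb).2 a hlt
      exact h2 h1
    intro a _ b _ hab
    rcases hab.lt_or_gt with hlt | hlt
    · exact key a b hlt
    · exact (key b a hlt).symm
  have hcover : (Finset.univ.filter (fun k => x k ≤ x m)).biUnion t = Finset.Icc ⊥ (x m) := by
    ext z
    constructor
    · intro hz
      obtain ⟨k, hk, hzk⟩ := Finset.mem_biUnion.1 hz
      have hkm : x k ≤ x m := (Finset.mem_filter.1 hk).2
      have hzxk : z ≤ x k := (Finset.mem_Icc.1 (Finset.mem_filter.1 hzk).1).2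
      exact Finset.mem_Icc.2 ⟨bot_le, hzxk.trans hkm⟩
    · intro hz
      have hzm : z ≤ x m := (Finset.mem_Icc.1 hz).2
      have hs : (Finset.univ.filter (fun k => z ≤ x k)).Nonempty :=
        ⟨m, Finset.mem_filter.2 ⟨Finset.mem_univ _, hzm⟩⟩
      set k0 := (Finset.univ.filter (fun k => z ≤ x k)).min' hs with hk0
      have hzk0 : z ≤ x k0 :=
        (Finset.mem_filter.1 ((Finset.univ.filter (fun k => z ≤ x k)).min'_mem hs)).2
      have hmin : ∀ j, j < k0 → ¬ z ≤ x j := by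
        intro j hj hzj
        have : k0 ≤ j := Finset.min'_le _ j (Finset.mem_filter.2 ⟨Finset.mem_univ _, hzj⟩)
        exact absurd (lt_of_lt_of_le hj this) (lt_irrefl _)
      have hk0m : x k0 ≤ x m := by
        obtain ⟨p, hp⟩ := hmeet k0 m
        have hzp : z ≤ x p := by rw [hp]; exact le_inf hzk0 hzm
        have h1 : k0 ≤ p := Finset.min'_le _ p (Finset.mem_filter.2 ⟨Finset.mem_univ _, hzp⟩)
        have h2 : p ≤ k0 := hord p k0 (by rw [hp]; exact inf_le_left)
        have hpk : p = k0 := le_antisymm h2 h1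
        rw [← hpk, hp]
        exact inf_le_right
      exact Finset.mem_biUnion.2 ⟨k0, Finset.mem_filter.2 ⟨Finset.mem_univ _, hk0m⟩,
        Finset.mem_filter.2 ⟨Finset.mem_Icc.2 ⟨bot_le, hzk0⟩, hmin⟩⟩
  rw [← hcover, Finset.sum_biUnion hdisj]

lemma entry_formula (hord : ∀ i j, x i ≤ x j → i ≤ j)
    (hmeet : ∀ i j, ∃ k, x k = x i ⊓ x j)
    (mu : P → P → ℂ) (hmu_self : ∀ p, mu p p = 1)
    (hmu_lt : ∀ p q : P, p < q → mu p q = -∑ r ∈ Finset.Ico p q, mu p r)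
    (h : P → ℂ) (c : Fin n → ℂ)
    (hc : ∀ i, c i = ∑ z ∈ (Finset.Icc ⊥ (x i)).filter
        (fun z => ∀ j, j < i → ¬ z ≤ x j), ∑ w ∈ Finset.Icc ⊥ z, h w * mu w z)
    (i j : Fin n) :
    ∑ k, (if x k ≤ x i then (1 : ℂ) else 0) * c k * (if x k ≤ x j then (1 : ℂ) else 0)
      = h (x i ⊓ x j) := by
  obtain ⟨m, hm⟩ := hmeet i j
  have hstep : ∀ k : Fin n,
      (if x k ≤ x i then (1 : ℂ) else 0) * c k * (if x k ≤ x j then (1 : ℂ) else 0)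
        = if x k ≤ x m then c k else 0 := by
    intro k
    have hiff : x k ≤ x m ↔ x k ≤ x i ∧ x k ≤ x j := by rw [hm, le_inf_iff]
    by_cases h1 : x k ≤ x i <;> by_cases h2 : x k ≤ x j <;>
      simp [h1, h2, hiff]
  rw [Finset.sum_congr rfl (fun k _ => hstep k), ← Finset.sum_filter, ← hm,
    Finset.sum_congr rfl (fun k _ => hc k),
    partition_sum x hord hmeet _ m,
    moebius_inversion mu hmu_self hmu_lt h (x m)]

end Lattice

/-- **global lower bound, dual problem.** If in addition each `l i ≠ 0`,
every nonzero `(S)_f`-eigenvalue `λ` of `[S]_f` satisfies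
`|λ| ≥ (min_i |f (x i)|)² m_g M_f⁻¹ C_n⁻¹ c_n`. -/
theorem global_lower_bound_join_wrt_meet
    {P : Type*} [Lattice P] [OrderBot P] [LocallyFiniteOrder P]
    [DecidableRel ((· ≤ ·) : P → P → Prop)]
    (mu : P → P → ℂ)
    (hmu_self : ∀ p, mu p p = 1)
    (hmu_lt : ∀ p q : P, p < q → mu p q = -∑ r ∈ Finset.Ico p q, mu p r)
    (hmu_nle : ∀ p q : P, ¬ p ≤ q → mu p q = 0)
    (f : P → ℂ) (hf : ∀ p, f p ≠ 0)
    (hsemi : ∀ p q : P, f (p ⊓ q) * f (p ⊔ q) = f p * f q)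
    (g : P → ℂ) (hg : ∀ p, g p = (f p)⁻¹)
    {n : ℕ} (hn : 0 < n)
    (x : Fin n → P) (hinj : Function.Injective x)
    (hord : ∀ i j, x i ≤ x j → i ≤ j)
    (hmeet : ∀ i j, ∃ k, x k = x i ⊓ x j)
    (d : Fin n → ℂ)
    (hd : ∀ i, d i = ∑ z ∈ (Finset.Icc ⊥ (x i)).filter
        (fun z => ∀ j, j < i → ¬ z ≤ x j),
      ∑ w ∈ Finset.Icc ⊥ z, f w * mu w z)
    (hd0 : ∀ i, d i ≠ 0)
    (l : Fin n → ℂ)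
    (hl : ∀ i, l i = ∑ z ∈ (Finset.Icc ⊥ (x i)).filter
        (fun z => ∀ j, j < i → ¬ z ≤ x j),
      ∑ w ∈ Finset.Icc ⊥ z, g w * mu w z)
    (hl0 : ∀ i, l i ≠ 0)
    (lam : ℂ) (hlam : lam ≠ 0) (v : Fin n → ℂ) (hv : v ≠ 0)
    (heig : (Matrix.of fun i j => f (x i ⊔ x j)).mulVec v =
      lam • (Matrix.of fun i j => f (x i ⊓ x j)).mulVec v) :
    ‖lam‖ ≥
      (⨅ i, ‖f (x i)‖) ^ 2 *
        (⨅ i, ‖l i‖) * (⨆ i, ‖d i‖)⁻¹ *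
        (CKn n)⁻¹ * cKn n := by
  have hne : Nonempty (Fin n) := ⟨⟨0, hn⟩⟩
  -- the incidence matrix and its real version
  set E : Matrix (Fin n) (Fin n) ℂ :=
    Matrix.of (fun i j => if x j ≤ x i then (1 : ℂ) else 0) with hE
  set Er : Matrix (Fin n) (Fin n) ℝ :=
    Matrix.of (fun i j => if x j ≤ x i then (1 : ℝ) else 0) with hEr
  have hmapE : Er.map Complex.ofReal = E := by
    ext i j
    by_cases h : x j ≤ x i <;> simp [hE, hEr, h]
  have hmapET : Erᵀ.map Complex.ofReal = Eᵀ := by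
    rw [Matrix.transpose_map, hmapE]
  have hMemKn : MemKn Er := by
    refine ⟨fun i j hij => ?_, fun i j => ?_, fun i => ?_⟩
    · have : ¬ x j ≤ x i := fun hle => absurd (hord j i hle) (not_le.2 hij)
      simp [hEr, this]
    · by_cases h : x j ≤ x i <;> simp [hEr, h]
    · simp [hEr]
  -- the diagonal matrix of f-values
  set F : Matrix (Fin n) (Fin n) ℂ := Matrix.diagonal (fun i => f (x i)) with hF
  -- factorizations
  have hMinf : (Matrix.of fun i j => f (x i ⊓ x j)) = E * Matrix.diagonal d * Eᵀ := by
    ext i j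
    rw [Matrix.mul_apply]
    simp only [Matrix.mul_diagonal, Matrix.transpose_apply, hE, Matrix.of_apply]
    exact (entry_formula x hord hmeet mu hmu_self hmu_lt f d hd i j).symm
  have hMg : (Matrix.of fun i j => g (x i ⊓ x j)) = E * Matrix.diagonal l * Eᵀ := by
    ext i j
    rw [Matrix.mul_apply]
    simp only [Matrix.mul_diagonal, Matrix.transpose_apply, hE, Matrix.of_apply]
    exact (entry_formula x hord hmeet mu hmu_self hmu_lt g l hl i j).symm
  have hMsup : (Matrix.of fun i j => f (x i ⊔ x j))
      = F * (E * Matrix.diagonal l * Eᵀ) * F := by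
    rw [← hMg]
    ext i j
    simp only [Matrix.mul_diagonal, Matrix.diagonal_mul, Matrix.of_apply, hF]
    have hs := hsemi (x i) (x j)
    have h0 := hf (x i ⊓ x j)
    rw [hg]
    field_simp
    linear_combination hs
  -- rewrite the eigenvalue equation
  rw [hMsup, hMinf] at heig
  simp only [← Matrix.mulVec_mulVec] at heig
  -- scalar quantities
  set mf : ℝ := ⨅ i, ‖f (x i)‖ with hmf
  set ml : ℝ := ⨅ i, ‖l i‖ with hml
  set Md : ℝ := ⨆ i, ‖d i‖ with hMd
  have hmf0 : 0 ≤ mf := le_ciInf fun i => norm_nonneg _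
  have hml0 : 0 ≤ ml := le_ciInf fun i => norm_nonneg _
  have hmfle : ∀ i, mf ≤ ‖f (x i)‖ :=
    fun i => ciInf_le (Set.finite_range _).bddBelow i
  have hmlle : ∀ i, ml ≤ ‖l i‖ :=
    fun i => ciInf_le (Set.finite_range _).bddBelow i
  have hMdge : ∀ i, ‖d i‖ ≤ Md :=
    fun i => le_ciSup (f := fun i => ‖d i‖) (Set.finite_range _).bddAbove i
  have hMdpos : 0 < Md :=
    lt_of_lt_of_le (norm_pos_iff.2 (hd0 ⟨0, hn⟩)) (hMdge ⟨0, hn⟩)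
  have hCpos : (0 : ℝ) < CKn n := lt_of_lt_of_le one_pos (one_le_CKn hn)
  have hc0 : (0 : ℝ) ≤ cKn n := cKn_nonneg
  have hC0 : (0 : ℝ) ≤ CKn n := le_of_lt hCpos
  -- bounds for E and Eᵀ acting on complex vectors
  have hElow : ∀ w : Fin n → ℂ, cKn n * qsc w ≤ qsc (E *ᵥ w) := by
    intro w
    have := kn_bound_low' hMemKn w
    rwa [hmapE] at this
  have hEup : ∀ w : Fin n → ℂ, qsc (E *ᵥ w) ≤ CKn n * qsc w := by
    intro w
    have := kn_bound_up' hMemKn w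
    rwa [hmapE] at this
  have hETlow : ∀ w : Fin n → ℂ, cKn n * qsc w ≤ qsc (Eᵀ *ᵥ w) := by
    intro w
    have := kn_bound_low hMemKn w
    rwa [hmapET] at this
  have hETup : ∀ w : Fin n → ℂ, qsc (Eᵀ *ᵥ w) ≤ CKn n * qsc w := by
    intro w
    have := kn_bound_up hMemKn w
    rwa [hmapET] at this
  -- chain of lower bounds on the left side
  set u1 : Fin n → ℂ := F *ᵥ v with hu1
  set u2 : Fin n → ℂ := Eᵀ *ᵥ u1 with hu2
  set u3 : Fin n → ℂ := Matrix.diagonal l *ᵥ u2 with hu3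
  set u4 : Fin n → ℂ := E *ᵥ u3 with hu4
  set w1 : Fin n → ℂ := Eᵀ *ᵥ v with hw1
  set w2 : Fin n → ℂ := Matrix.diagonal d *ᵥ w1 with hw2
  have hLv : F *ᵥ u4 = lam • (E *ᵥ w2) := heig
  have hQL : mf ^ 2 * (cKn n * (ml ^ 2 * (cKn n * (mf ^ 2 * qsc v)))) ≤ qsc (F *ᵥ u4) := by
    have s1 : mf ^ 2 * qsc v ≤ qsc u1 := qsc_diag_low _ mf hmf0 hmfle v
    have s2 : cKn n * qsc u1 ≤ qsc u2 := hETlow u1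
    have s3 : ml ^ 2 * qsc u2 ≤ qsc u3 := qsc_diag_low _ ml hml0 hmlle u2
    have s4 : cKn n * qsc u3 ≤ qsc u4 := hElow u3
    have s5 : mf ^ 2 * qsc u4 ≤ qsc (F *ᵥ u4) := qsc_diag_low _ mf hmf0 hmfle u4
    calc mf ^ 2 * (cKn n * (ml ^ 2 * (cKn n * (mf ^ 2 * qsc v))))
        ≤ mf ^ 2 * (cKn n * (ml ^ 2 * (cKn n * qsc u1))) := by
          refine mul_le_mul_of_nonneg_left (mul_le_mul_of_nonneg_left
            (mul_le_mul_of_nonneg_left (mul_le_mul_of_nonneg_left s1 hc0) (sq_nonneg ml))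
            hc0) (sq_nonneg mf)
      _ ≤ mf ^ 2 * (cKn n * (ml ^ 2 * qsc u2)) := by
          refine mul_le_mul_of_nonneg_left (mul_le_mul_of_nonneg_left
            (mul_le_mul_of_nonneg_left s2 (sq_nonneg ml)) hc0) (sq_nonneg mf)
      _ ≤ mf ^ 2 * (cKn n * qsc u3) := by
          refine mul_le_mul_of_nonneg_left (mul_le_mul_of_nonneg_left s3 hc0) (sq_nonneg mf)
      _ ≤ mf ^ 2 * qsc u4 := mul_le_mul_of_nonneg_left s4 (sq_nonneg mf)
      _ ≤ qsc (F *ᵥ u4) := s5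
  have hQR : qsc (lam • (E *ᵥ w2))
      ≤ Complex.normSq lam * (CKn n * (Md ^ 2 * (CKn n * qsc v))) := by
    rw [qsc_smul]
    have hns : 0 ≤ Complex.normSq lam := Complex.normSq_nonneg _
    have t1 : qsc w1 ≤ CKn n * qsc v := hETup v
    have t2 : qsc w2 ≤ Md ^ 2 * qsc w1 := qsc_diag_up _ Md hMdge w1
    have t3 : qsc (E *ᵥ w2) ≤ CKn n * qsc w2 := hEup w2
    refine mul_le_mul_of_nonneg_left ?_ hns
    calc qsc (E *ᵥ w2) ≤ CKn n * qsc w2 := t3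
      _ ≤ CKn n * (Md ^ 2 * qsc w1) := mul_le_mul_of_nonneg_left t2 hC0
      _ ≤ CKn n * (Md ^ 2 * (CKn n * qsc v)) := by
          refine mul_le_mul_of_nonneg_left (mul_le_mul_of_nonneg_left t1 (sq_nonneg Md)) hC0
  have hmain : mf ^ 2 * (cKn n * (ml ^ 2 * (cKn n * (mf ^ 2 * qsc v))))
      ≤ Complex.normSq lam * (CKn n * (Md ^ 2 * (CKn n * qsc v))) := by
    calc mf ^ 2 * (cKn n * (ml ^ 2 * (cKn n * (mf ^ 2 * qsc v))))
        ≤ qsc (F *ᵥ u4) := hQL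
      _ = qsc (lam • (E *ᵥ w2)) := by rw [hLv]
      _ ≤ Complex.normSq lam * (CKn n * (Md ^ 2 * (CKn n * qsc v))) := hQR
  have hQv : 0 < qsc v := qsc_pos hv
  set a : ℝ := mf ^ 2 * ml * cKn n with ha
  set b : ℝ := ‖lam‖ * CKn n * Md with hb
  have ha0 : 0 ≤ a := mul_nonneg (mul_nonneg (sq_nonneg _) hml0) hc0
  have hb0 : 0 ≤ b :=
    mul_nonneg (mul_nonneg (norm_nonneg _) hC0) (le_of_lt hMdpos)
  have hsq : a ^ 2 * qsc v ≤ b ^ 2 * qsc v := by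
    calc a ^ 2 * qsc v
        = mf ^ 2 * (cKn n * (ml ^ 2 * (cKn n * (mf ^ 2 * qsc v)))) := by rw [ha]; ring
      _ ≤ Complex.normSq lam * (CKn n * (Md ^ 2 * (CKn n * qsc v))) := hmain
      _ = b ^ 2 * qsc v := by rw [hb, ← Complex.sq_norm]; ring
  have hsq' : a ^ 2 ≤ b ^ 2 := le_of_mul_le_mul_right (by linarith [hsq]) hQv
  have hab : a ≤ b := by
    have := Real.sqrt_le_sqrt hsq'
    rwa [Real.sqrt_sq ha0, Real.sqrt_sq hb0] at this
  -- final arithmetic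
  rw [ge_iff_le]
  have hdenom : (0 : ℝ) < CKn n * Md := mul_pos hCpos hMdpos
  have : a / (CKn n * Md) ≤ ‖lam‖ := by
    rw [div_le_iff₀ hdenom]
    calc a ≤ b := hab
      _ = ‖lam‖ * (CKn n * Md) := by rw [hb]; ring
  calc mf ^ 2 * ml * Md⁻¹ * (CKn n)⁻¹ * cKn n
      = a / (CKn n * Md) := by rw [ha, div_eq_mul_inv, mul_inv]; ring
    _ ≤ ‖lam‖ := this
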